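/- Let n be an odd positive integer and let a, b ∈ {1, −1}^n. The circulant matrices A = c(a) and B = c(b) satisfy A Aᵀ + B Bᵀ = (2n − 2) I + 2 J (I the identity and J the all-ones n×n matrix) if and only if there exist integers α, β with α² + β² = 4n − 2 such that ∑_{s=0}^{n−1} a_s = α, ∑_{s=0}^{n−1} b_s = β, and a ⋆ a + b ⋆ b = (2n, 2, 2, …, 2). -/
import Mathlib


open Matrix

/-- The circulant matrix `c(a)` with entries `c(a)_{i,j} = a_{(j-i) mod n}`. -/
def circ {n : ℕ} (a : Fin n → ℝ) : Matrix (Fin n) (Fin n) ℝ :=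
  Matrix.of fun i j => a (j - i)

/-- Periodic autocorrelation of a vector `a ∈ ℝ^n`. -/
def autocorr {n : ℕ} (a : Fin n → ℝ) : Fin n → ℝ :=
  fun s => ∑ l, a l * a (l + s)

lemma circ_mul_transpose_apply {n : ℕ} [NeZero n] (a : Fin n → ℝ) (i j : Fin n) :
    (circ a * (circ a)ᵀ) i j = autocorr a (i - j) := by
  simp only [Matrix.mul_apply, Matrix.transpose_apply, circ, Matrix.of_apply, autocorr]
  refine (Fintype.sum_equiv (Equiv.addRight i) _ _ fun l => ?_).symm
  simp only [Equiv.coe_addRight]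
  congr 1
  · congr 1
    simp [add_sub_cancel_right]
  · congr 1
    rw [add_sub_assoc]

lemma sum_autocorr {n : ℕ} [NeZero n] (a : Fin n → ℝ) :
    ∑ s, autocorr a s = (∑ s, a s) ^ 2 := by
  simp only [autocorr]
  rw [Finset.sum_comm]
  have h : ∀ l : Fin n, ∑ s, a l * a (l + s) = a l * ∑ s, a s := by
    intro l
    rw [Finset.mul_sum]
    exact Fintype.sum_equiv (Equiv.addLeft l) _ _ (fun s => rfl)
  simp_rw [h]
  rw [← Finset.sum_mul]
  ring

/-- Characterization of D-optimal designs of circulant type: for `n` odd and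
`a, b ∈ {±1}^n`, the circulant matrices `A = c(a)`, `B = c(b)` satisfy
`AAᵀ + BBᵀ = (2n-2)I + 2J` iff there are integers `α, β` with `α² + β² = 4n - 2`,
`∑ a_s = α`, `∑ b_s = β` and `a ⋆ a + b ⋆ b = (2n, 2, …, 2)`. -/
theorem Doptimal_characterization {n : ℕ} [NeZero n] (hodd : Odd n)
    (a b : Fin n → ℝ) (ha : ∀ s, a s = 1 ∨ a s = -1) (hb : ∀ s, b s = 1 ∨ b s = -1) :
    (circ a * (circ a)ᵀ + circ b * (circ b)ᵀ =
        ((2 * (n : ℝ) - 2)) • (1 : Matrix (Fin n) (Fin n) ℝ) +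
          (2 : ℝ) • (Matrix.of fun _ _ => (1 : ℝ))) ↔
      (∃ α β : ℤ, α ^ 2 + β ^ 2 = 4 * (n : ℤ) - 2 ∧
        (∑ s, a s = (α : ℝ)) ∧ (∑ s, b s = (β : ℝ)) ∧
        (∀ s : Fin n, autocorr a s + autocorr b s =
          if s = 0 then 2 * (n : ℝ) else 2)) := by
  have key : (circ a * (circ a)ᵀ + circ b * (circ b)ᵀ =
        ((2 * (n : ℝ) - 2)) • (1 : Matrix (Fin n) (Fin n) ℝ) +
          (2 : ℝ) • (Matrix.of fun _ _ => (1 : ℝ))) ↔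
      (∀ s : Fin n, autocorr a s + autocorr b s = if s = 0 then 2 * (n : ℝ) else 2) := by
    constructor
    · intro h s
      have h2 := congr_fun (congr_fun h s) 0
      simp only [Matrix.add_apply, circ_mul_transpose_apply, Matrix.smul_apply,
        Matrix.one_apply, Matrix.of_apply, smul_eq_mul, sub_zero] at h2
      rw [h2]
      split_ifs <;> ring
    · intro h
      ext i j
      simp only [Matrix.add_apply, circ_mul_transpose_apply, Matrix.smul_apply,
        Matrix.one_apply, Matrix.of_apply, smul_eq_mul]
      rw [h (i - j)]
      by_cases hij : i = j
      · simp [hij]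
      · rw [if_neg (fun hc => hij (sub_eq_zero.mp hc)), if_neg hij]
        ring
  rw [key]
  constructor
  · intro h
    refine ⟨∑ s, (if a s = 1 then (1 : ℤ) else -1), ∑ s, (if b s = 1 then (1 : ℤ) else -1),
      ?_, ?_, ?_, h⟩
    · have hA : ∑ s, a s = ((∑ s, (if a s = 1 then (1 : ℤ) else -1) : ℤ) : ℝ) := by
        push_cast
        refine Finset.sum_congr rfl fun s _ => ?_
        rcases ha s with h1 | h1 <;> simp [h1] <;> norm_num
      have hB : ∑ s, b s = ((∑ s, (if b s = 1 then (1 : ℤ) else -1) : ℤ) : ℝ) := by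
        push_cast
        refine Finset.sum_congr rfl fun s _ => ?_
        rcases hb s with h1 | h1 <;> simp [h1] <;> norm_num
      have hsum : (∑ s, a s) ^ 2 + (∑ s, b s) ^ 2 = 4 * (n : ℝ) - 2 := by
        rw [← sum_autocorr a, ← sum_autocorr b, ← Finset.sum_add_distrib]
        calc ∑ s, (autocorr a s + autocorr b s)
            = ∑ s : Fin n, ((if s = 0 then 2 * (n : ℝ) - 2 else 0) + 2) := by
              refine Finset.sum_congr rfl fun s _ => ?_
              rw [h s]; split_ifs <;> ring
          _ = 4 * (n : ℝ) - 2 := by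
              rw [Finset.sum_add_distrib, Finset.sum_ite_eq' Finset.univ 0
                (fun _ => 2 * (n : ℝ) - 2)]
              simp [Finset.card_univ]
              ring
      rw [hA, hB] at hsum
      exact_mod_cast hsum
    · push_cast
      refine Finset.sum_congr rfl fun s _ => ?_
      rcases ha s with h1 | h1 <;> simp [h1] <;> norm_num
    · push_cast
      refine Finset.sum_congr rfl fun s _ => ?_
      rcases hb s with h1 | h1 <;> simp [h1] <;> norm_num
  · rintro ⟨α, β, hαβ, hA, hB, h⟩
    exact h
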